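/- Let $(\Omega,\mu)$ be a $\sigma$-finite measure space, $G$ a group acting on $\Omega$ by measurable bijections $\alpha_g$ preserving the equivalence class of $\mu$, with the induced isometries $(T_gf)(x)=f(\alpha_g^{-1}(x))$ on $L^\infty_\mu(\Omega)$ (scalar case $E=\mathbb{C}$). If the action of $G$ is metrically free, then for every finite set $F\subset G$ and coefficients $a_g\in L^\infty_\mu(\Omega)$ (acting by multiplication), $\big\|\sum_{g\in F}a_gT_g\big\|_{L(L^\infty_\mu(\Omega))} = \operatorname{esssup}_{x\in\Omega}\sum_{g\in F}|a_g(x)|$. -/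

import Mathlib

open MeasureTheory
open scoped ENNReal

section Aux

variable {Ω : Type*} [MeasurableSpace Ω] {μ : Measure Ω}

lemma aux_null_preimage (e : Ω ≃ᵐ Ω) (h1 : μ.map e ≪ μ) {N : Set Ω} (hN : μ N = 0) :
    μ (e ⁻¹' N) = 0 := by
  have := h1 hN
  rwa [MeasurableEquiv.map_apply] at this

lemma aux_null_image (e : Ω ≃ᵐ Ω) (h2 : μ ≪ μ.map e) {N : Set Ω} (hN : μ N = 0) :
    μ (e '' N) = 0 := by
  apply h2
  rw [MeasurableEquiv.map_apply]
  rwa [Set.preimage_image_eq N e.injective]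

lemma aux_coeFn_sum {E : Type*} [NormedAddCommGroup E] {p : ℝ≥0∞} {ι : Type*}
    (s : Finset ι) (f : ι → Lp E p μ) :
    ⇑(∑ i ∈ s, f i) =ᵐ[μ] fun x => ∑ i ∈ s, (f i : Ω → E) x := by
  classical
  induction s using Finset.induction_on with
  | empty => simp only [Finset.sum_empty]; exact Lp.coeFn_zero E p μ
  | insert g s hgs ih =>
      rw [Finset.sum_insert hgs]
      refine (Lp.coeFn_add _ _).trans ?_
      filter_upwards [ih] with x hx
      simp only [Pi.add_apply, hx, Finset.sum_insert hgs]

lemma aux_approx {G : Type*} (F : Finset G) (b : G → Ω → ℂ)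
    (hb : ∀ g, Measurable (b g)) :
    ∀ (Δ : Set Ω), MeasurableSet Δ → 0 < μ Δ → ∀ δ : ℝ, 0 < δ →
    ∃ (Δ' : Set Ω) (c : G → ℂ), MeasurableSet Δ' ∧ Δ' ⊆ Δ ∧ 0 < μ Δ' ∧
      ∀ g ∈ F, ∀ x ∈ Δ', ‖b g x - c g‖ ≤ δ := by
  classical
  induction F using Finset.induction_on with
  | empty =>
      intro Δ hΔ hpos δ hδ
      exact ⟨Δ, fun _ => 0, hΔ, subset_rfl, hpos, by simp⟩
  | insert g₀ F hgF ih =>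
      intro Δ hΔ hpos δ hδ
      obtain ⟨Δ₁, c₁, hΔ₁, hsub₁, hpos₁, hc₁⟩ := ih Δ hΔ hpos δ hδ
      obtain ⟨D, hDcount, hDdense⟩ := TopologicalSpace.exists_countable_dense ℂ
      have hcover : Δ₁ ⊆ ⋃ d ∈ D, Δ₁ ∩ b g₀ ⁻¹' Metric.ball d δ := by
        intro x hx
        obtain ⟨d, hd, hdd⟩ := Metric.dense_iff.mp hDdense (b g₀ x) δ hδ
        exact Set.mem_biUnion hdd ⟨hx, by simpa [Metric.mem_ball, dist_comm] using hd⟩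
      have : ∃ d ∈ D, 0 < μ (Δ₁ ∩ b g₀ ⁻¹' Metric.ball d δ) := by
        by_contra h
        push_neg at h
        have hz : μ (⋃ d ∈ D, Δ₁ ∩ b g₀ ⁻¹' Metric.ball d δ) = 0 :=
          (measure_biUnion_null_iff hDcount).mpr fun d hd => le_antisymm (h d hd) zero_le
        exact absurd (measure_mono_null hcover hz) (by exact hpos₁.ne')
      obtain ⟨d, _, hdpos⟩ := this
      refine ⟨Δ₁ ∩ b g₀ ⁻¹' Metric.ball d δ, Function.update c₁ g₀ d,
        hΔ₁.inter ((hb g₀) measurableSet_ball), fun x hx => hsub₁ hx.1, hdpos, ?_⟩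
      intro g hg x hx
      rcases Finset.mem_insert.mp hg with rfl | hgF'
      · simp only [Function.update_self]
        exact le_of_lt (by simpa [Metric.mem_ball, dist_eq_norm] using hx.2)
      · rw [Function.update_of_ne (by rintro rfl; exact hgF hgF')]
        exact hc₁ g hgF' x hx.1

end Aux

/-- Metrically free action (see the paper, §2). -/
def MetricallyFree {Ω : Type*} [MeasurableSpace Ω] (μ : Measure Ω)
    {G : Type*} (α : G → Ω → Ω) : Prop :=
  ∀ (S : Finset G) (Δ : Set Ω), MeasurableSet Δ → 0 < μ Δ →
    ∃ Δ' : Set Ω, MeasurableSet Δ' ∧ Δ' ⊆ Δ ∧ 0 < μ Δ' ∧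
      ∀ g ∈ S, ∀ h ∈ S, g ≠ h → μ (α g '' Δ' ∩ α h '' Δ') = 0

set_option maxHeartbeats 2000000 in
theorem stmt6 {Ω : Type*} [MeasurableSpace Ω] (μ : Measure Ω) [SigmaFinite μ]
    {G : Type*} [Group G]
    (α : G → Ω ≃ᵐ Ω)
    (hgrp : ∀ g h x, α (g * h) x = α g (α h x))
    (hclass : ∀ g : G, μ.map (α g) ≪ μ ∧ μ ≪ μ.map (α g))
    (hfree : MetricallyFree μ fun g => (α g : Ω → Ω))
    (T : G → (Lp ℂ ⊤ μ ≃ₗᵢ[ℂ] Lp ℂ ⊤ μ))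
    (hT : ∀ (g : G) (f : Lp ℂ ⊤ μ),
      (T g f : Ω → ℂ) =ᵐ[μ] fun x => f ((α g).symm x))
    (F : Finset G) (a : G → Ω → ℂ)
    (Mop : G → (Lp ℂ ⊤ μ →L[ℂ] Lp ℂ ⊤ μ))
    (hMop : ∀ (g : G) (f : Lp ℂ ⊤ μ),
      (Mop g f : Ω → ℂ) =ᵐ[μ] fun x => a g x * f x) :
    ‖∑ g ∈ F, (Mop g).comp
        ((T g).toContinuousLinearEquiv : Lp ℂ ⊤ μ →L[ℂ] Lp ℂ ⊤ μ)‖ =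
      essSup (fun x => ∑ g ∈ F, ‖a g x‖) μ := by
  classical
  rcases eq_or_ne μ 0 with rfl | hμ
  · -- zero measure case
    have hL : ‖∑ g ∈ F, (Mop g).comp
        ((T g).toContinuousLinearEquiv :
          Lp ℂ ⊤ (0 : Measure Ω) →L[ℂ] Lp ℂ ⊤ (0 : Measure Ω))‖ = 0 := by
      refine le_antisymm ?_ (norm_nonneg _)
      refine ContinuousLinearMap.opNorm_le_bound _ le_rfl fun f => ?_
      rw [Lp.norm_def, eLpNorm_measure_zero]
      simp
    rw [hL, essSup_eq_sInf]
    have hU : {r : ℝ | (0 : Measure Ω) {x | r < ∑ g ∈ F, ‖a g x‖} = 0} = Set.univ := by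
      ext r; simp
    rw [hU]
    have : ¬ BddBelow (Set.univ : Set ℝ) := by
      rintro ⟨c, hc⟩
      have h1 := hc (Set.mem_univ (c - 1))
      linarith
    exact (Real.sInf_of_not_bddBelow this).symm
  -- main case
  haveI : NeZero μ := ⟨hμ⟩
  haveI : (MeasureTheory.ae μ).NeBot := ae_neBot.mpr hμ
  set Sop : Lp ℂ ⊤ μ →L[ℂ] Lp ℂ ⊤ μ :=
    ∑ g ∈ F, (Mop g).comp
      ((T g).toContinuousLinearEquiv : Lp ℂ ⊤ μ →L[ℂ] Lp ℂ ⊤ μ) with hSopdef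
  -- group action basics
  have hα1 : ∀ x, α 1 x = x := by
    intro x
    have h := hgrp 1 1 x
    rw [one_mul] at h
    exact ((α 1).injective h).symm
  have hinvg : ∀ (g : G) (x : Ω), α g (α g⁻¹ x) = x := by
    intro g x
    have h := hgrp g g⁻¹ x
    rw [mul_inv_cancel, hα1] at h
    exact h.symm
  have hsymm : ∀ (g : G) (x : Ω), (α g).symm x = α g⁻¹ x := by
    intro g x
    apply (α g).injective
    rw [(α g).apply_symm_apply, hinvg]
  -- the constant function 1
  set u : Lp ℂ ⊤ μ := (memLp_top_const (1 : ℂ)).toLp (fun _ => (1 : ℂ)) with hu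
  -- measurable representatives of the coefficients
  set b : G → Ω → ℂ :=
    fun g => (Lp.aestronglyMeasurable (Mop g u)).mk ((Mop g u : Lp ℂ ⊤ μ) : Ω → ℂ) with hbdef
  have hbmeas : ∀ g, Measurable (b g) := fun g =>
    ((Lp.aestronglyMeasurable (Mop g u)).stronglyMeasurable_mk).measurable
  have hab : ∀ g : G, a g =ᵐ[μ] b g := by
    intro g
    have h2 : (u : Ω → ℂ) =ᵐ[μ] fun _ => (1 : ℂ) := MemLp.coeFn_toLp _
    have h1 := hMop g u
    have h3 := (Lp.aestronglyMeasurable (Mop g u)).ae_eq_mk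
    filter_upwards [h1, h2, h3] with x hx1 hx2 hx3
    rw [hbdef]
    dsimp only
    rw [← hx3, hx1, hx2, mul_one]
  set M : ℝ≥0∞ := essSup (fun x => ∑ g ∈ F, (‖b g x‖₊ : ℝ≥0∞)) μ with hMdef
  have hMne : M ≠ ∞ := by
    have hbd : ∀ᵐ x ∂μ, ∑ g ∈ F, (‖b g x‖₊ : ℝ≥0∞) ≤ ∑ g ∈ F, eLpNorm (Mop g u : Lp ℂ ⊤ μ) ⊤ μ := by
      have h : ∀ᵐ x ∂μ, ∀ g ∈ F, (‖b g x‖₊ : ℝ≥0∞) ≤ eLpNorm (Mop g u : Lp ℂ ⊤ μ) ⊤ μ := by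
        refine (ae_ball_iff F.countable_toSet).mpr fun g _ => ?_
        have h3 := (Lp.aestronglyMeasurable (Mop g u)).ae_eq_mk
        filter_upwards [ae_le_eLpNormEssSup (f := ((Mop g u : Lp ℂ ⊤ μ) : Ω → ℂ)) (μ := μ), h3]
          with x hx hx3
        rw [eLpNorm_exponent_top]
        calc (‖b g x‖₊ : ℝ≥0∞) = (‖(Mop g u : Lp ℂ ⊤ μ) x‖₊ : ℝ≥0∞) := by
              rw [hbdef]; dsimp only; rw [← hx3]
          _ ≤ _ := hx
      filter_upwards [h] with x hx
      exact Finset.sum_le_sum hx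
    have hle := essSup_le_of_ae_le _ hbd
    exact ne_top_of_le_ne_top (ENNReal.sum_ne_top.mpr fun g _ => Lp.eLpNorm_ne_top _) hle
  -- pointwise formula for Sop
  have hSf : ∀ f : Lp ℂ ⊤ μ, ((Sop f : Lp ℂ ⊤ μ) : Ω → ℂ) =ᵐ[μ]
      fun x => ∑ g ∈ F, a g x * ((T g f : Lp ℂ ⊤ μ) : Ω → ℂ) x := by
    intro f
    have h0 : Sop f = ∑ g ∈ F, Mop g (T g f) := by
      rw [hSopdef, ContinuousLinearMap.sum_apply]
      refine Finset.sum_congr rfl fun g _ => ?_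
      simp [ContinuousLinearMap.comp_apply]
    rw [h0]
    refine (aux_coeFn_sum F _).trans ?_
    have h : ∀ᵐ x ∂μ, ∀ g ∈ F, ((Mop g (T g f) : Lp ℂ ⊤ μ) : Ω → ℂ) x
        = a g x * ((T g f : Lp ℂ ⊤ μ) : Ω → ℂ) x :=
      (ae_ball_iff F.countable_toSet).mpr fun g _ => hMop g (T g f)
    filter_upwards [h] with x hx
    exact Finset.sum_congr rfl fun g hg => hx g hg
  -- upper bound
  have hub : ‖Sop‖ ≤ M.toReal := by
    refine ContinuousLinearMap.opNorm_le_bound _ ENNReal.toReal_nonneg fun f => ?_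
    have hTb : ∀ᵐ x ∂μ, ∀ g ∈ F,
        (‖((T g f : Lp ℂ ⊤ μ) : Ω → ℂ) x‖₊ : ℝ≥0∞) ≤ ENNReal.ofReal ‖f‖ := by
      refine (ae_ball_iff F.countable_toSet).mpr fun g _ => ?_
      filter_upwards [ae_le_eLpNormEssSup (f := ((T g f : Lp ℂ ⊤ μ) : Ω → ℂ)) (μ := μ)] with x hx
      refine le_trans hx ?_
      have h1 : ENNReal.ofReal ‖(T g f : Lp ℂ ⊤ μ)‖ = eLpNorm (T g f : Lp ℂ ⊤ μ) ⊤ μ := by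
        rw [Lp.norm_def, ENNReal.ofReal_toReal (Lp.eLpNorm_ne_top _)]
      rw [← eLpNorm_exponent_top, ← h1, (T g).norm_map f]
    have habF : ∀ᵐ x ∂μ, ∀ g ∈ F, a g x = b g x :=
      (ae_ball_iff F.countable_toSet).mpr fun g _ => hab g
    have hae : ∀ᵐ x ∂μ, (‖((Sop f : Lp ℂ ⊤ μ) : Ω → ℂ) x‖₊ : ℝ≥0∞) ≤ M * ENNReal.ofReal ‖f‖ := by
      filter_upwards [hSf f, hTb, ENNReal.ae_le_essSup (fun x => ∑ g ∈ F, (‖b g x‖₊ : ℝ≥0∞)),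
        habF] with x hx hxT hxM hxab
      rw [hx]
      calc (‖∑ g ∈ F, a g x * ((T g f : Lp ℂ ⊤ μ) : Ω → ℂ) x‖₊ : ℝ≥0∞)
          ≤ ∑ g ∈ F, (‖a g x * ((T g f : Lp ℂ ⊤ μ) : Ω → ℂ) x‖₊ : ℝ≥0∞) := by
            exact_mod_cast nnnorm_sum_le _ _
        _ = ∑ g ∈ F, (‖a g x‖₊ : ℝ≥0∞) * (‖((T g f : Lp ℂ ⊤ μ) : Ω → ℂ) x‖₊ : ℝ≥0∞) := by
            simp [nnnorm_mul, ENNReal.coe_mul]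
        _ ≤ ∑ g ∈ F, (‖b g x‖₊ : ℝ≥0∞) * ENNReal.ofReal ‖f‖ := by
            refine Finset.sum_le_sum fun g hg => ?_
            rw [hxab g hg]
            exact mul_le_mul' le_rfl (hxT g hg)
        _ = (∑ g ∈ F, (‖b g x‖₊ : ℝ≥0∞)) * ENNReal.ofReal ‖f‖ := (Finset.sum_mul _ _ _).symm
        _ ≤ M * ENNReal.ofReal ‖f‖ := mul_le_mul_left hxM _
    have h1 : eLpNorm ((Sop f : Lp ℂ ⊤ μ) : Ω → ℂ) ⊤ μ ≤ M * ENNReal.ofReal ‖f‖ := by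
      rw [eLpNorm_exponent_top]
      exact essSup_le_of_ae_le _ hae
    rw [Lp.norm_def]
    calc (eLpNorm ((Sop f : Lp ℂ ⊤ μ) : Ω → ℂ) ⊤ μ).toReal
        ≤ (M * ENNReal.ofReal ‖f‖).toReal :=
          ENNReal.toReal_mono (ENNReal.mul_ne_top hMne ENNReal.ofReal_ne_top) h1
      _ = M.toReal * ‖f‖ := by rw [ENNReal.toReal_mul, ENNReal.toReal_ofReal (norm_nonneg f)]
  -- the sum of enorms vs ofReal of the sum of norms
  have hsum_eq : ∀ x, ∑ g ∈ F, (‖b g x‖₊ : ℝ≥0∞) = ENNReal.ofReal (∑ g ∈ F, ‖b g x‖) := by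
    intro x
    rw [ENNReal.ofReal_sum_of_nonneg fun g _ => norm_nonneg _]
    exact Finset.sum_congr rfl fun g _ => (ofReal_norm _).symm
  -- positive measure of superlevel sets
  have hset : ∀ t : ℝ, t < M.toReal → 0 < μ {x | t < ∑ g ∈ F, ‖b g x‖} := by
    intro t ht
    rcases lt_or_ge t 0 with htneg | htpos
    · refine lt_of_lt_of_le (Measure.measure_univ_pos.mpr hμ) (measure_mono ?_)
      intro x _
      exact lt_of_lt_of_le htneg (Finset.sum_nonneg fun g _ => norm_nonneg _)
    · by_contra h
      push_neg at h
      have h0 : μ {x | t < ∑ g ∈ F, ‖b g x‖} = 0 := le_antisymm h zero_le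
      have hae2 : ∀ᵐ x ∂μ, ∑ g ∈ F, ‖b g x‖ ≤ t := by
        rw [ae_iff]
        simpa [not_le] using h0
      have hMle : M ≤ ENNReal.ofReal t := by
        refine essSup_le_of_ae_le _ ?_
        filter_upwards [hae2] with x hx
        rw [hsum_eq x]
        exact ENNReal.ofReal_le_ofReal hx
      have h2 := ENNReal.toReal_mono ENNReal.ofReal_ne_top hMle
      rw [ENNReal.toReal_ofReal htpos] at h2
      exact absurd ht (not_lt.mpr h2)
  -- lower bound
  have hlbkey : ∀ t : ℝ, t < M.toReal → t ≤ ‖Sop‖ := by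
    intro t ht
    rcases lt_or_ge t 0 with htneg | htpos
    · exact le_trans htneg.le (norm_nonneg _)
    have hδstep : ∀ δ : ℝ, 0 < δ → t - 2 * F.card * δ ≤ ‖Sop‖ := by
      intro δ hδ
      obtain ⟨Δ₀, c, hΔ₀meas, hΔ₀sub, hΔ₀pos, hc⟩ :=
        aux_approx F b hbmeas {x | t < ∑ g ∈ F, ‖b g x‖}
          (measurableSet_lt measurable_const (Finset.measurable_sum _ fun g _ => (hbmeas g).norm))
          (hset t ht) δ hδ
      obtain ⟨Δ', hΔ'meas, hΔ'sub, hΔ'pos, hdisj⟩ :=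
        hfree (F.image (·⁻¹)) Δ₀ hΔ₀meas hΔ₀pos
      set lam : G → ℂ := fun g => if c g = 0 then 1 else (starRingEnd ℂ) (c g) / (‖c g‖ : ℂ)
        with hlamdef
      have hlam_norm : ∀ g, ‖lam g‖ = 1 := by
        intro g
        rw [hlamdef]
        dsimp only
        split_ifs with h
        · exact norm_one
        · rw [norm_div, RCLike.norm_conj, Complex.norm_real, norm_norm]
          exact div_self (norm_ne_zero_iff.mpr h)
      have hlam_mul : ∀ g, lam g * c g = ((‖c g‖ : ℝ) : ℂ) := by
        intro g
        rw [hlamdef]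
        dsimp only
        split_ifs with h
        · simp [h]
        · have hcc : (starRingEnd ℂ) (c g) * c g = ((‖c g‖ ^ 2 : ℝ) : ℂ) := by
            rw [mul_comm, Complex.mul_conj, Complex.normSq_eq_norm_sq]
          have hne : ((‖c g‖ : ℝ) : ℂ) ≠ 0 :=
            Complex.ofReal_ne_zero.mpr (norm_ne_zero_iff.mpr h)
          rw [div_mul_eq_mul_div, hcc]
          rw [show ((‖c g‖ ^ 2 : ℝ) : ℂ) = ((‖c g‖ : ℝ) : ℂ) ^ 2 by push_cast; ring, sq,
            mul_div_assoc, div_self hne, mul_one]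
      set E : G → Set Ω := fun h => α h⁻¹ '' Δ' with hEdef
      have hEmeas : ∀ h : G, MeasurableSet (E h) := fun h =>
        (α h⁻¹).measurableSet_image.mpr hΔ'meas
      set φ : Ω → ℂ := fun x => ∑ h ∈ F, (E h).indicator (fun _ => lam h) x with hφdef
      have hφmeas : Measurable φ :=
        Finset.measurable_sum _ fun h _ => measurable_const.indicator (hEmeas h)
      have hφbd : ∀ x, ‖φ x‖ ≤ (F.card : ℝ) := by
        intro x
        refine le_trans (norm_sum_le _ _) ?_
        have h1 : ∀ h ∈ F, ‖(E h).indicator (fun _ => lam h) x‖ ≤ 1 := by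
          intro h _
          by_cases hx : x ∈ E h
          · rw [Set.indicator_of_mem hx, hlam_norm h]
          · rw [Set.indicator_of_notMem hx]
            simp
        calc ∑ h ∈ F, ‖(E h).indicator (fun _ => lam h) x‖ ≤ ∑ _h ∈ F, (1 : ℝ) :=
              Finset.sum_le_sum h1
          _ = F.card := by simp
      have hmem : MemLp φ ⊤ μ :=
        memLp_top_of_bound hφmeas.aestronglyMeasurable _ (Filter.Eventually.of_forall hφbd)
      set f : Lp ℂ ⊤ μ := hmem.toLp φ with hfdef
      have hfcoe : (f : Ω → ℂ) =ᵐ[μ] φ := MemLp.coeFn_toLp _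
      have hnull : ∀ g ∈ F, ∀ h ∈ F, g ≠ h → μ (E g ∩ E h) = 0 := by
        intro g hg h hh hgh
        have hd := hdisj g⁻¹ (Finset.mem_image_of_mem _ hg) h⁻¹ (Finset.mem_image_of_mem _ hh)
          (fun hcon => hgh (inv_injective hcon))
        simpa [hEdef] using hd
      -- ‖f‖ ≤ 1
      have hf_norm : ‖f‖ ≤ 1 := by
        have hones : ∀ᵐ x ∂μ, ∀ g ∈ F, ∀ h ∈ F, g ≠ h → x ∉ E g ∩ E h := by
          refine (ae_ball_iff F.countable_toSet).mpr fun g hg => ?_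
          refine (ae_ball_iff F.countable_toSet).mpr fun h hh => ?_
          by_cases hgh : g = h
          · filter_upwards with x hne
            exact absurd hgh hne
          · filter_upwards [measure_eq_zero_iff_ae_notMem.mp (hnull g hg h hh hgh)] with x hx _
            exact hx
        have hb1 : ∀ᵐ x ∂μ, (‖φ x‖₊ : ℝ≥0∞) ≤ 1 := by
          filter_upwards [hones] with x hx
          have h1 : ‖φ x‖ ≤ 1 := by
            rw [hφdef]
            dsimp only
            by_cases hex : ∃ h₀ ∈ F, x ∈ E h₀
            · obtain ⟨h₀, hh₀, hxh₀⟩ := hex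
              rw [Finset.sum_eq_single h₀]
              · rw [Set.indicator_of_mem hxh₀, hlam_norm h₀]
              · intro h hh hne
                refine Set.indicator_of_notMem (fun hxh => ?_) _
                exact hx h hh h₀ hh₀ hne ⟨hxh, hxh₀⟩
              · intro hcon
                exact absurd hh₀ hcon
            · push_neg at hex
              rw [Finset.sum_eq_zero fun h hh => Set.indicator_of_notMem (hex h hh) _]
              simp
          calc (‖φ x‖₊ : ℝ≥0∞) = ENNReal.ofReal ‖φ x‖ := (ofReal_norm _).symm
            _ ≤ ENNReal.ofReal 1 := ENNReal.ofReal_le_ofReal h1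
            _ = 1 := by simp
        rw [Lp.norm_def]
        have h2 : eLpNorm (f : Ω → ℂ) ⊤ μ ≤ 1 := by
          rw [eLpNorm_congr_ae hfcoe, eLpNorm_exponent_top]
          exact essSup_le_of_ae_le _ hb1
        calc (eLpNorm (f : Ω → ℂ) ⊤ μ).toReal ≤ (1 : ℝ≥0∞).toReal :=
              ENNReal.toReal_mono (by simp) h2
          _ = 1 := by simp
      -- pointwise description of T g f
      have hTφ : ∀ᵐ x ∂μ, ∀ g ∈ F, ((T g f : Lp ℂ ⊤ μ) : Ω → ℂ) x = φ (α g⁻¹ x) := by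
        refine (ae_ball_iff F.countable_toSet).mpr fun g _ => ?_
        have hN : μ {y | (f : Ω → ℂ) y ≠ φ y} = 0 := hfcoe
        have hNg : μ ((α g).symm ⁻¹' {y | (f : Ω → ℂ) y ≠ φ y}) = 0 := by
          have himg : (α g).symm ⁻¹' {y | (f : Ω → ℂ) y ≠ φ y}
              = (α g : Ω → Ω) '' {y | (f : Ω → ℂ) y ≠ φ y} := by
            ext z
            constructor
            · intro hz
              exact ⟨(α g).symm z, hz, (α g).apply_symm_apply z⟩
            · rintro ⟨y, hy, rfl⟩
              simpa [(α g).symm_apply_apply] using hy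
          rw [himg]
          exact aux_null_image (α g) (hclass g).2 hN
        filter_upwards [hT g f, measure_eq_zero_iff_ae_notMem.mp hNg] with x hx hx2
        rw [hx]
        have h3 : (f : Ω → ℂ) ((α g).symm x) = φ ((α g).symm x) := by
          by_contra hcon
          exact hx2 hcon
        rw [h3, hsymm g x]
      -- junk sets
      have hΔ'junk : ∀ᵐ x ∂μ, ∀ g ∈ F, ∀ h ∈ F, g ≠ h
          → x ∉ Δ' ∩ ((α g : Ω → Ω) '' E h) := by
        refine (ae_ball_iff F.countable_toSet).mpr fun g hg => ?_
        refine (ae_ball_iff F.countable_toSet).mpr fun h hh => ?_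
        by_cases hgh : g = h
        · filter_upwards with x hne
          exact absurd hgh hne
        · have h0 : μ (Δ' ∩ ((α g : Ω → Ω) '' E h)) = 0 := by
            have h1 : μ ((α g : Ω → Ω) '' (E g ∩ E h)) = 0 :=
              aux_null_image (α g) (hclass g).2 (hnull g hg h hh hgh)
            have h2 : (α g : Ω → Ω) '' (E g ∩ E h)
                = ((α g : Ω → Ω) '' E g) ∩ ((α g : Ω → Ω) '' E h) :=
              Set.image_inter (α g).injective
            have h3 : (α g : Ω → Ω) '' E g = Δ' := by
              rw [hEdef]
              dsimp only
              rw [Set.image_image]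
              have : (fun y => α g (α g⁻¹ y)) '' Δ' = (fun y => y) '' Δ' := by
                refine Set.image_congr fun y _ => hinvg g y
              rw [this, Set.image_id']
            rw [h2, h3] at h1
            exact h1
          filter_upwards [measure_eq_zero_iff_ae_notMem.mp h0] with x hx _
          exact hx
      have habF : ∀ᵐ x ∂μ, ∀ g ∈ F, a g x = b g x :=
        (ae_ball_iff F.countable_toSet).mpr fun g _ => hab g
      -- main estimate on Δ'
      have hmain : ∀ᵐ x ∂μ, x ∈ Δ'
          → t - 2 * F.card * δ ≤ ‖((Sop f : Lp ℂ ⊤ μ) : Ω → ℂ) x‖ := by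
        filter_upwards [hSf f, hTφ, hΔ'junk, habF] with x hx hxT hxJ hxab hxΔ'
        have hval : ((Sop f : Lp ℂ ⊤ μ) : Ω → ℂ) x = ∑ g ∈ F, b g x * lam g := by
          rw [hx]
          refine Finset.sum_congr rfl fun g hg => ?_
          rw [hxT g hg, hxab g hg]
          congr 1
          rw [hφdef]
          dsimp only
          rw [Finset.sum_eq_single g]
          · exact Set.indicator_of_mem (Set.mem_image_of_mem _ hxΔ') _
          · intro h hh hne
            refine Set.indicator_of_notMem (fun hmemE => ?_) _
            exact hxJ g hg h hh (Ne.symm hne) ⟨hxΔ', ⟨α g⁻¹ x, hmemE, hinvg g x⟩⟩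
          · intro hcon
            exact absurd hg hcon
        rw [hval]
        have hre : ∀ g ∈ F, ‖b g x‖ - 2 * δ ≤ (b g x * lam g).re := by
          intro g hg
          have hbc : ‖b g x - c g‖ ≤ δ := hc g hg x (hΔ'sub hxΔ')
          have hdecomp : b g x * lam g = ((‖c g‖ : ℝ) : ℂ) + (b g x - c g) * lam g := by
            rw [← hlam_mul g]
            ring
          rw [hdecomp, Complex.add_re, Complex.ofReal_re]
          have h2 : |((b g x - c g) * lam g).re| ≤ ‖(b g x - c g) * lam g‖ := by
            exact Complex.abs_re_le_norm _
          have h3 : ‖(b g x - c g) * lam g‖ ≤ δ := by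
            rw [norm_mul, hlam_norm g, mul_one]
            exact hbc
          have h4 : ‖b g x‖ - ‖c g‖ ≤ ‖b g x - c g‖ := norm_sub_norm_le _ _
          have h5 := neg_abs_le (((b g x - c g) * lam g).re)
          linarith
        have hsum : ∑ g ∈ F, ‖b g x‖ - 2 * F.card * δ ≤ (∑ g ∈ F, b g x * lam g).re := by
          rw [Complex.re_sum]
          have h6 := Finset.sum_le_sum hre
          have h7 : ∑ g ∈ F, (‖b g x‖ - 2 * δ) = ∑ g ∈ F, ‖b g x‖ - 2 * F.card * δ := by
            rw [Finset.sum_sub_distrib, Finset.sum_const, nsmul_eq_mul]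
            ring
          linarith
        have h8 : (∑ g ∈ F, b g x * lam g).re ≤ ‖∑ g ∈ F, b g x * lam g‖ := by
          exact Complex.re_le_norm _
        have ht' : t < ∑ g ∈ F, ‖b g x‖ := hΔ₀sub (hΔ'sub hxΔ')
        linarith
      -- conclude the δ-step
      rcases le_or_gt (t - 2 * F.card * δ) 0 with hr | hr
      · exact le_trans hr (norm_nonneg _)
      have hSfnorm : t - 2 * F.card * δ ≤ ‖Sop f‖ := by
        by_contra hcon
        push_neg at hcon
        have hub2 : ∀ᵐ x ∂μ, ‖((Sop f : Lp ℂ ⊤ μ) : Ω → ℂ) x‖ < t - 2 * F.card * δ := by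
          have h1 : eLpNorm ((Sop f : Lp ℂ ⊤ μ) : Ω → ℂ) ⊤ μ
              < ENNReal.ofReal (t - 2 * F.card * δ) := by
            rw [Lp.norm_def] at hcon
            exact (ENNReal.lt_ofReal_iff_toReal_lt (Lp.eLpNorm_ne_top _)).mpr hcon
          rw [eLpNorm_exponent_top] at h1
          filter_upwards [ae_le_eLpNormEssSup (f := ((Sop f : Lp ℂ ⊤ μ) : Ω → ℂ)) (μ := μ)]
            with x hx
          have h2 := lt_of_le_of_lt hx h1
          rwa [← ofReal_norm, ENNReal.ofReal_lt_ofReal_iff hr] at h2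
        have h3 : ∀ᵐ x ∂μ, x ∉ Δ' := by
          filter_upwards [hmain, hub2] with x h1 h2 hxΔ'
          exact absurd (h1 hxΔ') (not_le.mpr h2)
        exact absurd (measure_eq_zero_iff_ae_notMem.mpr h3) hΔ'pos.ne'
      calc t - 2 * F.card * δ ≤ ‖Sop f‖ := hSfnorm
        _ ≤ ‖Sop‖ * ‖f‖ := Sop.le_opNorm f
        _ ≤ ‖Sop‖ * 1 := mul_le_mul_of_nonneg_left hf_norm (norm_nonneg _)
        _ = ‖Sop‖ := mul_one _
    refine le_of_forall_pos_le_add fun ε hε => ?_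
    have hδpos : (0 : ℝ) < ε / (2 * F.card + 1) := by positivity
    have hstep := hδstep _ hδpos
    have hle : 2 * F.card * (ε / (2 * F.card + 1)) ≤ ε := by
      rw [mul_div_assoc', div_le_iff₀ (by positivity)]
      have : (0 : ℝ) ≤ F.card := Nat.cast_nonneg _
      nlinarith
    linarith
  have hlb : M.toReal ≤ ‖Sop‖ := by
    by_contra hcon
    push_neg at hcon
    have h2 : (‖Sop‖ + M.toReal) / 2 < M.toReal := by linarith
    have h3 := hlbkey _ h2
    linarith
  -- identify the right-hand side
  have heq : essSup (fun x => ∑ g ∈ F, ‖a g x‖) μ = M.toReal := by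
    have hcongr : (fun x => ∑ g ∈ F, ‖a g x‖) =ᵐ[μ] fun x => ∑ g ∈ F, ‖b g x‖ := by
      filter_upwards [(ae_ball_iff F.countable_toSet).mpr fun (g : G) (_ : g ∈ F) => hab g]
        with x hx
      exact Finset.sum_congr rfl fun g hg => by rw [hx g hg]
    rw [essSup_congr_ae hcongr]
    have habound : ∀ᵐ x ∂μ, ∑ g ∈ F, ‖b g x‖ ≤ M.toReal := by
      filter_upwards [ENNReal.ae_le_essSup (fun x => ∑ g ∈ F, (‖b g x‖₊ : ℝ≥0∞))] with x hx
      rw [hsum_eq x] at hx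
      have h1 := ENNReal.toReal_mono hMne hx
      rwa [ENNReal.toReal_ofReal (Finset.sum_nonneg fun g _ => norm_nonneg _)] at h1
    refine le_antisymm ?_ ?_
    · have hco : Filter.IsCoboundedUnder (· ≤ ·) (MeasureTheory.ae μ)
          (fun x => ∑ g ∈ F, ‖b g x‖) :=
        Filter.isCoboundedUnder_le_of_eventually_le (MeasureTheory.ae μ) (x := 0)
          (Filter.Eventually.of_forall fun x => Finset.sum_nonneg fun g _ => norm_nonneg _)
      exact Filter.limsup_le_of_le hco habound
    · by_contra hcon
      push_neg at hcon
      have hpos := hset _ hcon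
      have hae3 : ∀ᵐ x ∂μ, ∑ g ∈ F, ‖b g x‖
          ≤ essSup (fun x => ∑ g ∈ F, ‖b g x‖) μ :=
        ae_le_essSup ⟨M.toReal, Filter.eventually_map.mpr habound⟩
      have h0 : μ {x | essSup (fun x => ∑ g ∈ F, ‖b g x‖) μ < ∑ g ∈ F, ‖b g x‖} = 0 := by
        have h1 := ae_iff.mp hae3
        simpa [not_le] using h1
      exact absurd h0 hpos.ne'
  rw [heq]
  exact le_antisymm hub hlb
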